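/- Let μ be a finite Borel measure on an interval [ℓ, c], and let f, g : [ℓ, c] → ℝ be bounded measurable functions both satisfying the Volterra equation u(x) = a + ∫_{[ℓ, x]} (x − y) u(y) dμ(y) for all x ∈ [ℓ, c], for the same constant a. Then f = g on [ℓ, c]. -/

import Mathlib

open MeasureTheory Set

/-- uniqueness for the Volterra equation. -/
theorem stmt7 (μ : Measure ℝ) [IsFiniteMeasure μ] (ℓ c a : ℝ)
    (f g : ℝ → ℝ) (hfm : Measurable f) (hgm : Measurable g)
    (hfb : ∃ C : ℝ, ∀ x ∈ Icc ℓ c, |f x| ≤ C)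
    (hgb : ∃ C : ℝ, ∀ x ∈ Icc ℓ c, |g x| ≤ C)
    (hf : ∀ x ∈ Icc ℓ c, f x = a + ∫ y in Icc ℓ x, (x - y) * f y ∂μ)
    (hg : ∀ x ∈ Icc ℓ c, g x = a + ∫ y in Icc ℓ x, (x - y) * g y ∂μ) :
    ∀ x ∈ Icc ℓ c, f x = g x := by
  obtain ⟨Cf, hCf⟩ := hfb
  obtain ⟨Cg, hCg⟩ := hgb
  intro x₀ hx₀
  have hlc : ℓ ≤ c := hx₀.1.trans hx₀.2
  set C := Cf + Cg with hCdef
  have hC0 : 0 ≤ C := by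
    have h1 := hCf ℓ ⟨le_refl ℓ, hlc⟩
    have h2 := hCg ℓ ⟨le_refl ℓ, hlc⟩
    have := abs_nonneg (f ℓ)
    have := abs_nonneg (g ℓ)
    simp only [hCdef]; linarith
  have hhC : ∀ y ∈ Icc ℓ c, |f y - g y| ≤ C := by
    intro y hy
    calc |f y - g y| ≤ |f y| + |g y| := abs_sub _ _
    _ ≤ Cf + Cg := add_le_add (hCf y hy) (hCg y hy)
  set K := (μ Set.univ).toReal with hK
  have hK0 : 0 ≤ K := ENNReal.toReal_nonneg
  set δ := 1 / (K + 1) with hδdef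
  have hδpos : 0 < δ := by positivity
  have hδK : δ * K < 1 := by
    rw [hδdef, div_mul_eq_mul_div, one_mul, div_lt_one (by positivity)]
    linarith
  have hδK0 : 0 ≤ δ * K := by positivity
  -- integrability of the integrands
  have hint : ∀ (u : ℝ → ℝ), Measurable u → (∀ y ∈ Icc ℓ c, |u y| ≤ Cf + Cg) →
      ∀ x ∈ Icc ℓ c, IntegrableOn (fun y => (x - y) * u y) (Icc ℓ x) μ := by
    intro u hum hub x hx
    refine Integrable.mono' (integrable_const ((c - ℓ) * (Cf + Cg)))
      ((measurable_const.sub measurable_id).mul hum).aestronglyMeasurable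
      ((ae_restrict_iff' measurableSet_Icc).2 (Filter.Eventually.of_forall ?_))
    intro y hy
    have hy' : y ∈ Icc ℓ c := ⟨hy.1, hy.2.trans hx.2⟩
    have hub' : |u y| ≤ Cf + Cg := hub y hy'
    have h1 : |x - y| ≤ c - ℓ := by
      rw [abs_of_nonneg (by linarith [hy.2])]
      linarith [hy.1, hx.2]
    rw [Real.norm_eq_abs, abs_mul]
    exact mul_le_mul h1 hub' (abs_nonneg _) (by linarith)
  -- key identity for the difference
  have key : ∀ x ∈ Icc ℓ c, f x - g x = ∫ y in Icc ℓ x, (x - y) * (f y - g y) ∂μ := by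
    intro x hx
    have hCf0 : 0 ≤ Cf := (abs_nonneg _).trans (hCf ℓ ⟨le_refl ℓ, hlc⟩)
    have hCg0 : 0 ≤ Cg := (abs_nonneg _).trans (hCg ℓ ⟨le_refl ℓ, hlc⟩)
    have h1 := hint f hfm (fun y hy => (hCf y hy).trans (by linarith)) x hx
    have h2 := hint g hgm (fun y hy => (hCg y hy).trans (by linarith)) x hx
    rw [hf x hx, hg x hx]
    have : ∀ y : ℝ, (x - y) * (f y - g y) = (x - y) * f y - (x - y) * g y := by
      intro y; ring
    simp only [this]
    rw [integral_sub h1 h2]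
    ring
  have hμle : ∀ x : ℝ, (μ (Icc ℓ x)).toReal ≤ K := by
    intro x
    exact ENNReal.toReal_mono (measure_ne_top μ _) (measure_mono (subset_univ _))
  -- main induction
  have main : ∀ n : ℕ, ∀ x ∈ Icc ℓ c, x < ℓ + n * δ → f x = g x := by
    intro n
    induction n with
    | zero =>
      intro x hx hlt
      simp only [Nat.cast_zero, zero_mul, add_zero] at hlt
      linarith [hx.1]
    | succ n ih =>
      have inner : ∀ m : ℕ, ∀ x ∈ Icc ℓ c, x < ℓ + (n + 1 : ℕ) * δ →
          |f x - g x| ≤ C * (δ * K) ^ m := by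
        intro m
        induction m with
        | zero =>
          intro x hx _
          simpa using hhC x hx
        | succ m ihm =>
          intro x hx hlt
          rw [key x hx]
          have bound : ∀ y ∈ Icc ℓ x, ‖(x - y) * (f y - g y)‖ ≤ δ * (C * (δ * K) ^ m) := by
            intro y hy
            have hy' : y ∈ Icc ℓ c := ⟨hy.1, hy.2.trans hx.2⟩
            rw [Real.norm_eq_abs, abs_mul]
            by_cases hcase : y < ℓ + n * δ
            · have : f y = g y := ih y hy' hcase
              rw [this, sub_self, abs_zero, mul_zero]
              positivity
            · push_neg at hcase
              have hxy : |x - y| ≤ δ := by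
                rw [abs_of_nonneg (by linarith [hy.2])]
                push_cast at hlt ⊢
                linarith
              have hhy : |f y - g y| ≤ C * (δ * K) ^ m :=
                ihm y hy' (lt_of_le_of_lt hy.2 hlt)
              exact mul_le_mul hxy hhy (abs_nonneg _) (le_of_lt hδpos)
          calc |∫ y in Icc ℓ x, (x - y) * (f y - g y) ∂μ|
              ≤ δ * (C * (δ * K) ^ m) * (μ (Icc ℓ x)).toReal :=
                norm_setIntegral_le_of_norm_le_const (measure_lt_top μ _) bound
            _ ≤ δ * (C * (δ * K) ^ m) * K := by
                apply mul_le_mul_of_nonneg_left (hμle x) (by positivity)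
            _ = C * (δ * K) ^ (m + 1) := by ring
      intro x hx hlt
      have htend : Filter.Tendsto (fun m : ℕ => C * (δ * K) ^ m) Filter.atTop (nhds 0) := by
        have := tendsto_pow_atTop_nhds_zero_of_lt_one hδK0 hδK
        simpa using this.const_mul C
      have hle : |f x - g x| ≤ 0 :=
        ge_of_tendsto htend (Filter.Eventually.of_forall fun m => inner m x hx hlt)
      have := abs_nonneg (f x - g x)
      have : |f x - g x| = 0 := le_antisymm hle this
      have := abs_eq_zero.1 this
      linarith [sub_eq_zero.1 this]
  obtain ⟨n, hn⟩ := exists_nat_gt ((x₀ - ℓ) / δ)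
  apply main n x₀ hx₀
  rw [div_lt_iff₀ hδpos] at hn
  linarith
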